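/- Fix a prime p and an integer N > p. For f ∈ E_{N,p} and 0 ≤ a ≤ N−p define γ_a(f) := −max_{z∈[1,p]} (φ_a(z) − f(z)). Then every f ∈ E_{N,p} satisfies f(x) = max_{0 ≤ a ≤ N−p} (φ_a(x) + γ_a(f)) for all x ∈ [1,p]. -/

import Mathlib

set_option maxHeartbeats 1000000


/-- `f` has right-hand slope `s` at `x`. -/
def HasRightSlope (f : ℝ → ℝ) (x s : ℝ) : Prop :=
  ∃ δ : ℝ, 0 < δ ∧ ∀ y ∈ Set.Ico x (x + δ), f y = f x + s * (y - x)

/-- `f` has left-hand slope `s` at `x`. -/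
def HasLeftSlope (f : ℝ → ℝ) (x s : ℝ) : Prop :=
  ∃ δ : ℝ, 0 < δ ∧ ∀ y ∈ Set.Ioc (x - δ) x, f y = f x + s * (y - x)

/-- The `ℝ_max`-module `E_{N,p}`: continuous convex piecewise affine functions `f : [1,p] → ℝ`
with integral slopes such that `f(1) = f(p)` and `−f'₊(1) + p·f'₋(p) ≤ N`. -/
def ENp (p N : ℕ) (f : ℝ → ℝ) : Prop :=
  ContinuousOn f (Set.Icc 1 p) ∧ ConvexOn ℝ (Set.Icc 1 (p : ℝ)) f ∧
  (∃ (n : ℕ) (t : ℕ → ℝ), 0 < n ∧ t 0 = 1 ∧ t n = p ∧ (∀ i < n, t i < t (i + 1)) ∧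
    ∀ i < n, ∃ (m : ℤ) (c : ℝ), ∀ x ∈ Set.Icc (t i) (t (i + 1)), f x = (m : ℝ) * x + c) ∧
  f 1 = f p ∧
  (∃ s1 sp : ℝ, HasRightSlope f 1 s1 ∧ HasLeftSlope f p sp ∧ -s1 + p * sp ≤ N)

/-- The extremal generators `φ_a(x) = max(−a(x−1), b(x−p))` with `b = ⌊(N−a)/p⌋`,
and `φ_0 = 0`. -/
noncomputable def phiF (p N a : ℕ) (x : ℝ) : ℝ :=
  if a = 0 then 0
  else max (-(a : ℝ) * (x - 1)) ((⌊((N : ℝ) - a) / p⌋ : ℝ) * (x - p))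

/-- `γ_a(f) = −max_{z ∈ [1,p]} (φ_a(z) − f(z))`. -/
noncomputable def gammaF (p N a : ℕ) (f : ℝ → ℝ) : ℝ :=
  -sSup {y : ℝ | ∃ z ∈ Set.Icc (1 : ℝ) p, y = phiF p N a z - f z}

open Set

/-- A convex function lies above the extension of any of its affine pieces. -/
lemma line_le_of_convexOn {f : ℝ → ℝ} {A B u v m c : ℝ}
    (hconv : ConvexOn ℝ (Icc A B) f)
    (hu : u ∈ Icc A B) (hv : v ∈ Icc A B) (huv : u < v)
    (haff : ∀ y ∈ Icc u v, f y = m * y + c) :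
    ∀ z ∈ Icc A B, m * z + c ≤ f z := by
  have hfu : f u = m * u + c := haff u ⟨le_rfl, huv.le⟩
  have hfv : f v = m * v + c := haff v ⟨huv.le, le_rfl⟩
  intro z hz
  rcases lt_trichotomy z u with h | h | h
  · have hs := hconv.slope_mono_adjacent hz hv h huv
    rw [hfu, hfv] at hs
    rw [div_le_div_iff₀ (by linarith) (by linarith)] at hs
    nlinarith
  · rw [h, hfu]
  · rcases le_or_gt z v with h2 | h2
    · rw [haff z ⟨h.le, h2⟩]
    · have hs := hconv.slope_mono_adjacent hu hz huv h2
      rw [hfu, hfv] at hs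
      rw [div_le_div_iff₀ (by linarith) (by linarith)] at hs
      nlinarith

/-- Monotonicity of the partition points. -/
lemma t_mono {t : ℕ → ℝ} {n : ℕ} (h : ∀ i < n, t i < t (i + 1)) :
    ∀ i j, i ≤ j → j ≤ n → t i ≤ t j := by
  intro i j hij hjn
  induction j with
  | zero => simp_all
  | succ k ih =>
    rcases Nat.lt_or_ge i (k + 1) with hk | hk
    · exact le_trans (ih (by omega) (by omega)) (h k (by omega)).le
    · have : i = k + 1 := by omega
      simp [this]

/-- Locating a point in a partition. -/
lemma find_piece {t : ℕ → ℝ} :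
    ∀ n : ℕ, (∀ i < n, t i < t (i + 1)) → ∀ x : ℝ, t 0 ≤ x → x < t n →
      ∃ i < n, t i ≤ x ∧ x < t (i + 1) := by
  intro n
  induction n with
  | zero => intro _ x h0 h1; exact absurd (h0.trans_lt h1) (lt_irrefl _)
  | succ k ih =>
    intro h x h0 h1
    rcases le_or_gt (t k) x with hk | hk
    · exact ⟨k, by omega, hk, h1⟩
    · obtain ⟨i, hi, h2, h3⟩ := ih (fun i hi => h i (by omega)) x h0 hk
      exact ⟨i, by omega, h2, h3⟩

lemma phiF_continuous (p N a : ℕ) : Continuous (phiF p N a) := by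
  unfold phiF
  rcases eq_or_ne a 0 with h | h
  · simp only [h, if_pos]; exact continuous_const
  · simp only [h, if_neg, ite_false]
    exact ((continuous_const.mul (continuous_id.sub continuous_const)).max
      ((continuous_const.mul (continuous_id.sub continuous_const))))

lemma phiF_eq (p N a : ℕ) (hb : 0 ≤ ⌊((N : ℝ) - a) / p⌋) {x : ℝ} (hx : x ≤ p) :
    phiF p N a x = max (-(a : ℝ) * (x - 1)) ((⌊((N : ℝ) - a) / p⌋ : ℝ) * (x - p)) := by
  unfold phiF
  rcases eq_or_ne a 0 with h | h <;> simp [h]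
  subst h
  have hb' : (0:ℤ) ≤ ⌊(N:ℝ)/p⌋ := by simpa using hb
  exact mul_nonpos_of_nonneg_of_nonpos (by exact_mod_cast hb') (by linarith)

/-- Every `f ∈ E_{N,p}` satisfies
`f(x) = max_{0 ≤ a ≤ N−p} (φ_a(x) + γ_a(f))` on `[1,p]`. -/
theorem statement15 (p N : ℕ) (hp : p.Prime) (hN : p < N)
    (f : ℝ → ℝ) (hf : ENp p N f) :
    ∀ x ∈ Set.Icc (1 : ℝ) p,
      f x = (Finset.range (N - p + 1)).sup' (by simp)
        (fun a => phiF p N a x + gammaF p N a f) := by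
  intro x hx
  obtain ⟨hc, hconv, ⟨n, t, hn, ht0, htn, htlt, hpieces⟩, hfp, s1, sp, hs1, hsp, hbound⟩ := hf
  have hp2 : (2:ℝ) ≤ p := by exact_mod_cast hp.two_le
  have h1p : (1:ℝ) ≤ p := by linarith
  have hpR : (0:ℝ) < p := by linarith
  -- global minorants at the endpoints
  have SUB1 : ∀ z ∈ Icc (1:ℝ) p, f 1 + s1 * (z - 1) ≤ f z := by
    obtain ⟨δ, hδ, hloc⟩ := hs1
    set v := min (1 + δ/2) ((1 + p)/2) with hv
    have hv1 : 1 < v := lt_min (by linarith) (by linarith)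
    have hvp : v ≤ p := le_trans (min_le_right _ _) (by linarith)
    have hvδ : v < 1 + δ := lt_of_le_of_lt (min_le_left _ _) (by linarith)
    have key := line_le_of_convexOn (m := s1) (c := f 1 - s1) hconv
      ⟨le_rfl, h1p⟩ ⟨hv1.le, hvp⟩ hv1
      (fun y hy => by rw [hloc y ⟨hy.1, lt_of_le_of_lt hy.2 hvδ⟩]; ring)
    intro z hz
    have := key z hz
    linarith
  have SUBp : ∀ z ∈ Icc (1:ℝ) p, f p + sp * (z - p) ≤ f z := by
    obtain ⟨δ, hδ, hloc⟩ := hsp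
    set u := max (p - δ/2) ((1 + p)/2) with hu
    have hup : u < p := max_lt (by linarith) (by linarith)
    have h1u : 1 ≤ u := le_trans (by linarith) (le_max_right _ _)
    have huδ : p - δ < u := lt_of_lt_of_le (by linarith) (le_max_left _ _)
    have key := line_le_of_convexOn (m := sp) (c := f p - sp * p) hconv
      ⟨h1u, hup.le⟩ ⟨h1p, le_rfl⟩ hup
      (fun y hy => by rw [hloc y ⟨lt_of_lt_of_le huδ hy.1, hy.2⟩]; ring)
    intro z hz
    have := key z hz
    linarith
  have hs1neg : s1 ≤ 0 := by nlinarith [SUB1 p ⟨h1p, le_rfl⟩]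
  have hspnn : 0 ≤ sp := by nlinarith [SUBp 1 ⟨le_rfl, h1p⟩]
  -- sp is an integer
  obtain ⟨mp, hmp⟩ : ∃ mp : ℤ, sp = (mp : ℝ) := by
    obtain ⟨m, c, haff⟩ := hpieces (n - 1) (by omega)
    have hnn : n - 1 + 1 = n := by omega
    rw [hnn, htn] at haff
    obtain ⟨δ, hδ, hloc⟩ := hsp
    have htn1 : t (n - 1) < p := by
      rw [← htn]; conv_rhs => rw [← hnn]
      exact htlt (n - 1) (by omega)
    set w := max (t (n - 1)) (p - δ/2) with hw
    have hwp : w < p := max_lt htn1 (by linarith)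
    have hw1 : t (n - 1) ≤ w := le_max_left _ _
    have hwδ : p - δ < w := lt_of_lt_of_le (by linarith) (le_max_right _ _)
    have e1 := haff w ⟨hw1, hwp.le⟩
    have e2 := haff p ⟨htn1.le, le_rfl⟩
    have l1 := hloc w ⟨hwδ, hwp.le⟩
    refine ⟨m, ?_⟩
    have h1 : (m:ℝ) * (w - p) = sp * (w - p) := by linear_combination l1 + e2 - e1
    exact (mul_right_cancel₀ (sub_ne_zero.mpr hwp.ne) h1).symm
  -- an integer subgradient at x
  obtain ⟨s, SUBx, hs1s, hssp, hcase2⟩ :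
      ∃ s : ℤ, (∀ z ∈ Icc (1:ℝ) p, f x + (s:ℝ) * (z - x) ≤ f z) ∧ s1 ≤ (s:ℝ) ∧ (s:ℝ) ≤ sp ∧
        (s ≤ -1 → (1:ℝ) ≤ sp) := by
    rcases eq_or_lt_of_le hx.2 with hxp | hxp
    · -- x = p
      refine ⟨mp, ?_, ?_, by rw [hmp], ?_⟩
      · intro z hz
        rw [hxp, ← hmp]
        exact SUBp z hz
      · rw [← hmp]
        nlinarith [SUB1 p ⟨h1p, le_rfl⟩, SUBp 1 ⟨le_rfl, h1p⟩]
      · intro hneg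
        exfalso
        have h1 : (mp:ℝ) ≤ -1 := by exact_mod_cast hneg
        rw [hmp] at hspnn
        linarith
    · -- x < p
      obtain ⟨i, hi, hix, hxi⟩ := find_piece n htlt x (by rw [ht0]; exact hx.1)
        (by rw [htn]; exact hxp)
      obtain ⟨m, c, haff⟩ := hpieces i hi
      have hu1 : (1:ℝ) ≤ t i := by rw [← ht0]; exact t_mono htlt 0 i (by omega) (by omega)
      have hvp' : t (i+1) ≤ p := by rw [← htn]; exact t_mono htlt (i+1) n (by omega) le_rfl
      have huv : t i < t (i+1) := htlt i hi
      have hv1 : 1 < t (i+1) := lt_of_le_of_lt (le_trans hu1 hix) hxi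
      have huIcc : t i ∈ Icc (1:ℝ) p := ⟨hu1, le_trans huv.le hvp'⟩
      have hvIcc : t (i+1) ∈ Icc (1:ℝ) p := ⟨hv1.le, hvp'⟩
      have key := line_le_of_convexOn hconv huIcc hvIcc huv haff
      have hfx : f x = (m:ℝ) * x + c := haff x ⟨hix, hxi.le⟩
      have SUBx : ∀ z ∈ Icc (1:ℝ) p, f x + (m:ℝ) * (z - x) ≤ f z := by
        intro z hz
        have := key z hz
        rw [hfx]
        linarith
      have hfv : f (t (i+1)) = (m:ℝ) * (t (i+1)) + c := haff _ ⟨huv.le, le_rfl⟩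
      have hfu : f (t i) = (m:ℝ) * (t i) + c := haff _ ⟨le_rfl, huv.le⟩
      refine ⟨m, SUBx, ?_, ?_, ?_⟩
      · have h1 := SUB1 (t (i+1)) hvIcc
        have h2 := SUBx 1 ⟨le_rfl, h1p⟩
        nlinarith [hfx]
      · have h1 := SUBp (t i) huIcc
        have h2 := SUBx p ⟨h1p, le_rfl⟩
        have hup : t i < p := lt_of_le_of_lt hix hxp
        nlinarith [hfx]
      · intro hneg
        have hmneg : (m:ℝ) ≤ -1 := by exact_mod_cast hneg
        have hfx1 : f x ≤ f 1 := by
          have := SUBx 1 ⟨le_rfl, h1p⟩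
          nlinarith [hx.1]
        have hfvp : f (t (i+1)) < f p := by nlinarith [hfx, hxi]
        have h3 := SUBp (t (i+1)) hvIcc
        have hsppos : 0 < sp := by
          by_contra hcon
          push_neg at hcon
          have h5 : 0 ≤ (-sp) * (↑p - t (i+1)) :=
            mul_nonneg (by linarith) (by linarith [hvp'])
          nlinarith
        have h4 : (0:ℤ) < mp := by
          have : (0:ℝ) < (mp:ℝ) := by rw [← hmp]; exact hsppos
          exact_mod_cast this
        rw [hmp]
        exact_mod_cast (by omega : (1:ℤ) ≤ mp)
  -- the key pointwise maximization claim
  have main : ∃ a ∈ Finset.range (N - p + 1),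
      ∀ z ∈ Icc (1:ℝ) p, phiF p N a z - f z ≤ phiF p N a x - f x := by
    rcases lt_trichotomy s 0 with hsneg | hs0 | hspos
    · -- case 2 : s ≤ -1
      have hsp1 : (1:ℝ) ≤ sp := hcase2 (by omega)
      have haZ : (0:ℤ) ≤ -s := by omega
      set a : ℕ := (-s).toNat with ha
      have haR : (a:ℝ) = -(s:ℝ) := by
        have h0 : ((-s).toNat : ℤ) = -s := Int.toNat_of_nonneg haZ
        rw [ha]
        exact_mod_cast congrArg (fun k : ℤ => (k : ℝ)) h0
      have hsle : (-(s:ℝ)) ≤ (N:ℝ) - p := by nlinarith [hbound, hs1s, hsp1, hpR]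
      have hmemN : a ∈ Finset.range (N - p + 1) := by
        rw [Finset.mem_range]
        have h1 : (-s : ℤ) ≤ (N:ℤ) - p := by exact_mod_cast hsle
        omega
      have hbsp : sp ≤ (⌊((N:ℝ) - a) / p⌋ : ℝ) := by
        rw [hmp]
        have h2 : (mp : ℤ) ≤ ⌊((N:ℝ) - a) / p⌋ := by
          apply Int.le_floor.mpr
          rw [le_div_iff₀ hpR, haR]
          nlinarith [hbound, hs1s, hmp.symm.le, hmp.le]
        exact_mod_cast h2
      have hb0 : (0:ℤ) ≤ ⌊((N:ℝ) - a) / p⌋ := by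
        have h3 : (0:ℝ) ≤ (⌊((N:ℝ) - a) / p⌋ : ℝ) := le_trans hspnn hbsp
        exact_mod_cast h3
      refine ⟨a, hmemN, ?_⟩
      intro z hz
      rw [phiF_eq p N a hb0 hz.2, phiF_eq p N a hb0 hx.2,
        ← max_sub_sub_right, ← max_sub_sub_right]
      rw [haR] at hbsp ⊢
      refine le_trans (max_le ?_ ?_) (le_max_left _ _)
      · have h1 := SUBx z hz
        linarith
      · have h1 := SUBp z hz
        have h2 := SUBx 1 ⟨le_rfl, h1p⟩
        have hprod : 0 ≤ ((⌊((N:ℝ) - -(s:ℝ)) / p⌋ : ℝ) - sp) * (p - z) :=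
          mul_nonneg (by linarith) (by linarith [hz.2])
        linarith [hfp]
    · -- case 1 : s = 0
      refine ⟨0, by simp, ?_⟩
      intro z hz
      have h := SUBx z hz
      rw [hs0] at h
      push_cast at h
      norm_num [phiF]
      linarith
    · -- case 3 : 1 ≤ s
      have hspos1 : (1:ℤ) ≤ s := by omega
      have hps : (p:ℝ) * s ≤ (p:ℝ) * sp := by
        apply mul_le_mul_of_nonneg_left hssp (le_of_lt hpR)
      have haZnnR : (0:ℝ) ≤ (N:ℝ) - p * s := by linarith [hbound]
      set aZ : ℤ := N - p * s with haz
      have haZnn : 0 ≤ aZ := by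
        have : (0:ℝ) ≤ (aZ:ℝ) := by rw [haz]; push_cast; linarith
        exact_mod_cast this
      set a : ℕ := aZ.toNat with ha
      have haR : (a:ℝ) = (N:ℝ) - p * s := by
        have h0 : (aZ.toNat : ℤ) = aZ := Int.toNat_of_nonneg haZnn
        rw [ha]
        have : ((aZ.toNat : ℤ) : ℝ) = ((aZ : ℤ) : ℝ) := by exact_mod_cast congrArg (fun k : ℤ => (k : ℝ)) h0
        rw [haz] at this
        push_cast at this ⊢
        linarith
      have hmemN : a ∈ Finset.range (N - p + 1) := by
        rw [Finset.mem_range]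
        have h1 : aZ ≤ (N:ℤ) - p := by
          rw [haz]
          have := mul_le_mul_of_nonneg_left hspos1 (by positivity : (0:ℤ) ≤ (p:ℤ))
          omega
        omega
      have hbb : ⌊((N:ℝ) - a) / p⌋ = s := by
        rw [haR, show ((N:ℝ) - ((N:ℝ) - ↑p * ↑s)) / ↑p = (s:ℝ) by field_simp; ring]
        exact Int.floor_intCast s
      have hb0 : (0:ℤ) ≤ ⌊((N:ℝ) - a) / p⌋ := by rw [hbb]; omega
      refine ⟨a, hmemN, ?_⟩
      intro z hz
      rw [phiF_eq p N a hb0 hz.2, phiF_eq p N a hb0 hx.2, hbb,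
        ← max_sub_sub_right, ← max_sub_sub_right]
      refine le_trans (max_le ?_ ?_) (le_max_right _ _)
      · have h1 := SUB1 z hz
        have h2 := SUBx p ⟨h1p, le_rfl⟩
        have hprod : 0 ≤ ((a:ℝ) + s1) * (z - 1) := by
          apply mul_nonneg _ (by linarith [hz.1])
          rw [haR]
          linarith [hbound]
        linarith [hfp]
      · have h := SUBx z hz
        linarith
  -- wrap up
  obtain ⟨a₀, ha₀, hkey⟩ := main
  have hSne : ∀ a : ℕ, {y : ℝ | ∃ z ∈ Icc (1:ℝ) p, y = phiF p N a z - f z}.Nonempty :=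
    fun a => ⟨phiF p N a 1 - f 1, 1, ⟨le_rfl, h1p⟩, rfl⟩
  apply le_antisymm
  · have hub : sSup {y : ℝ | ∃ z ∈ Icc (1:ℝ) p, y = phiF p N a₀ z - f z}
        ≤ phiF p N a₀ x - f x := by
      apply csSup_le (hSne a₀)
      rintro y ⟨z, hz, rfl⟩
      exact hkey z hz
    have h1 : f x ≤ phiF p N a₀ x + gammaF p N a₀ f := by
      unfold gammaF
      linarith
    exact le_trans h1 (Finset.le_sup' (fun a => phiF p N a x + gammaF p N a f) ha₀)
  · apply Finset.sup'_le
    intro a ha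
    have hBdd : BddAbove {y : ℝ | ∃ z ∈ Icc (1:ℝ) p, y = phiF p N a z - f z} := by
      have hset : {y : ℝ | ∃ z ∈ Icc (1:ℝ) p, y = phiF p N a z - f z}
          = (fun z => phiF p N a z - f z) '' Icc 1 p := by
        ext y
        simp [eq_comm]
      rw [hset]
      exact (isCompact_Icc.image_of_continuousOn
        (((phiF_continuous p N a).continuousOn).sub hc)).bddAbove
    have hmem : phiF p N a x - f x ∈ {y : ℝ | ∃ z ∈ Icc (1:ℝ) p, y = phiF p N a z - f z} :=
      ⟨x, hx, rfl⟩
    have h2 := le_csSup hBdd hmem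
    unfold gammaF
    linarith
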